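/- Let M ∈ ℝ^{r̄×r̄} be Hurwitz, N ∈ ℝ^{r̄×n₂}, Φ ∈ ℝ^{r̄×r̄}, Γ ∈ ℝ^{n₂×r̄}, and let T ∈ ℝ^{r̄×r̄} be invertible with T Φ − M T = N Γ; set Ψ := Γ T⁻¹. Let g : [0,∞) → ℝ^{n₂} be continuous, and let differentiable functions ϱ, η : [0,∞) → ℝ^{r̄} and x₂ : [0,∞) → ℝ^{n₂} satisfy ϱ̇(t) = T Φ T⁻¹ ϱ(t), ẋ₂(t) = g(t) − Ψ ϱ(t), and η̇(t) = M η(t) + N g(t) − M N x₂(t). Define the disturbance d(t) := −Ψ ϱ(t) and its estimate d̂₀(t) := −Ψ (η(t) − N x₂(t)). Then, for all initial conditions, d̂₀(t) − d(t) converges to zero exponentially as t → ∞. -/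

import Mathlib

open Matrix Filter Topology

/-- A real square matrix is Hurwitz if all of its complex eigenvalues have
negative real part. -/
def Hurwitz {n : Type*} [Fintype n] [DecidableEq n] (A : Matrix n n ℝ) : Prop :=
  ∀ μ ∈ spectrum ℂ (A.map (algebraMap ℝ ℂ)), μ.re < 0

/-- `e(t) → 0` exponentially: `‖e t‖ ≤ c e^{-λ t}` for all sufficiently large `t`. -/
def ExpDecay {E : Type*} [Norm E] (e : ℝ → E) : Prop :=
  ∃ c > (0:ℝ), ∃ lam > (0:ℝ), ∃ T : ℝ, ∀ t ≥ T, ‖e t‖ ≤ c * Real.exp (-lam * t)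

section Auxiliary

open NormedSpace
open scoped Matrix.Norms.L2Operator

variable {n : ℕ}

/-- mulVec by a fixed vector, as a linear map in the matrix. -/
noncomputable def mulVecAt (v : Fin n → ℂ) : Matrix (Fin n) (Fin n) ℂ →ₗ[ℂ] (Fin n → ℂ) :=
  { toFun := fun B => B *ᵥ v
    map_add' := fun B C => Matrix.add_mulVec B C v
    map_smul' := fun c B => Matrix.smul_mulVec c B v }

lemma pow_mulVec_eigen (A : Matrix (Fin n) (Fin n) ℂ) (v : Fin n → ℂ) (μ : ℂ)
    (hv : A *ᵥ v = μ • v) (k : ℕ) : (A ^ k) *ᵥ v = (μ ^ k) • v := by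
  induction k with
  | zero => simp
  | succ k ih =>
      rw [pow_succ, ← Matrix.mulVec_mulVec, hv, Matrix.mulVec_smul, ih, pow_succ,
        smul_smul, mul_comm]

lemma exp_mulVec_eigen (A : Matrix (Fin n) (Fin n) ℂ) (v : Fin n → ℂ) (μ : ℂ)
    (hv : A *ᵥ v = μ • v) : (exp A) *ᵥ v = Complex.exp μ • v := by
  classical
  haveI : CompleteSpace (Matrix (Fin n) (Fin n) ℂ) := FiniteDimensional.complete ℂ _
  have hWc : Continuous (mulVecAt v) := (mulVecAt v).continuous_of_finiteDimensional
  have h2 : HasSum (fun k : ℕ => mulVecAt v ((k.factorial : ℂ)⁻¹ • A ^ k))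
      (mulVecAt v (exp A)) := (exp_series_hasSum_exp' (𝕂 := ℂ) A).map (mulVecAt v) hWc
  have h3 : ∀ k : ℕ, mulVecAt v ((k.factorial : ℂ)⁻¹ • A ^ k)
      = ((k.factorial : ℂ)⁻¹ * μ ^ k) • v := by
    intro k
    rw [LinearMap.map_smul]
    show (k.factorial : ℂ)⁻¹ • ((A ^ k) *ᵥ v) = _
    rw [pow_mulVec_eigen A v μ hv k, smul_smul]
  rw [funext h3] at h2
  have h4 : HasSum (fun k : ℕ => ((k.factorial : ℂ)⁻¹ * μ ^ k)) (exp μ) := by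
    simpa [smul_eq_mul] using exp_series_hasSum_exp' (𝕂 := ℂ) μ
  have h6 : mulVecAt v (exp A) = Complex.exp μ • v := by
    rw [h2.unique (h4.smul_const v), Complex.exp_eq_exp_ℂ]
  exact h6

lemma exp_eq_aeval (A : Matrix (Fin n) (Fin n) ℂ) :
    ∃ p : Polynomial ℂ, exp A = Polynomial.aeval A p := by
  classical
  haveI : CompleteSpace (Matrix (Fin n) (Fin n) ℂ) := FiniteDimensional.complete ℂ _
  let S : Subalgebra ℂ (Matrix (Fin n) (Fin n) ℂ) := (Polynomial.aeval A).range
  have hSclosed : IsClosed (S.toSubmodule : Set (Matrix (Fin n) (Fin n) ℂ)) :=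
    Submodule.closed_of_finiteDimensional _
  have hmem : ∀ m : ℕ, (∑ k ∈ Finset.range m, ((k.factorial : ℂ)⁻¹ • A ^ k)) ∈ S := by
    intro m
    refine Subalgebra.sum_mem S fun k _ => Subalgebra.smul_mem S (pow_mem ?_ k) _
    exact ⟨Polynomial.X, by simp⟩
  have h1 : Tendsto (fun m => ∑ k ∈ Finset.range m, ((k.factorial : ℂ)⁻¹ • A ^ k))
      atTop (𝓝 (exp A)) := (exp_series_hasSum_exp' (𝕂 := ℂ) A).tendsto_sum_nat
  have : exp A ∈ S.toSubmodule :=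
    hSclosed.mem_of_tendsto h1 (Filter.Eventually.of_forall hmem)
  obtain ⟨p, hp⟩ := this
  exact ⟨p, hp.symm⟩

lemma aeval_mulVec_eigen (A : Matrix (Fin n) (Fin n) ℂ) (v : Fin n → ℂ) (μ : ℂ)
    (hv : A *ᵥ v = μ • v) (p : Polynomial ℂ) :
    (Polynomial.aeval A p) *ᵥ v = (p.eval μ) • v := by
  classical
  rw [Polynomial.aeval_eq_sum_range, Polynomial.eval_eq_sum_range]
  show mulVecAt v _ = _
  rw [map_sum, Finset.sum_smul]
  refine Finset.sum_congr rfl fun k _ => ?_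
  rw [LinearMap.map_smul]
  show p.coeff k • ((A ^ k) *ᵥ v) = _
  rw [pow_mulVec_eigen A v μ hv k, smul_smul]

lemma mem_eigen (A : Matrix (Fin n) (Fin n) ℂ) {μ : ℂ} (h : μ ∈ spectrum ℂ A) :
    ∃ v : Fin n → ℂ, v ≠ 0 ∧ A *ᵥ v = μ • v := by
  rw [← AlgEquiv.spectrum_eq (Matrix.toLinAlgEquiv' (R := ℂ) (n := Fin n)) A] at h
  obtain ⟨v, hv⟩ := Module.End.HasEigenvalue.exists_hasEigenvector
    (Module.End.hasEigenvalue_iff_mem_spectrum.mpr h)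
  exact ⟨v, hv.2, by simpa [Matrix.toLinAlgEquiv'_apply] using hv.apply_eq_smul⟩

lemma spectrum_exp_subset [NeZero n] (A : Matrix (Fin n) (Fin n) ℂ) :
    spectrum ℂ (exp A) ⊆ Complex.exp '' spectrum ℂ A := by
  classical
  haveI : CompleteSpace (Matrix (Fin n) (Fin n) ℂ) := FiniteDimensional.complete ℂ _
  obtain ⟨p, hp⟩ := exp_eq_aeval A
  intro μ hμ
  rw [hp, spectrum.map_polynomial_aeval_of_nonempty A p (spectrum.nonempty A)] at hμ
  obtain ⟨lam, hlam, hev⟩ := hμ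
  obtain ⟨v, hv0, hvAv⟩ := mem_eigen A hlam
  have h1 : (exp A) *ᵥ v = Complex.exp lam • v := exp_mulVec_eigen A v lam hvAv
  have h2 : (exp A) *ᵥ v = (p.eval lam) • v := by
    rw [hp]; exact aeval_mulVec_eigen A v lam hvAv p
  have : Complex.exp lam = p.eval lam := by
    have := h1.symm.trans h2
    by_contra hne
    exact hv0 (by
      have := sub_eq_zero.mpr this
      rw [← sub_smul] at this
      exact (smul_eq_zero.mp this).resolve_left (sub_ne_zero.mpr hne))
  exact ⟨lam, hlam, by rw [this]; exact hev⟩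

lemma spectralRadius_exp_lt_one [NeZero n] {A : Matrix (Fin n) (Fin n) ℂ}
    (spec_subset : spectrum ℂ (exp A) ⊆ Complex.exp '' spectrum ℂ A)
    (hA : ∀ μ ∈ spectrum ℂ A, μ.re < 0) :
    spectralRadius ℂ (exp A) < 1 := by
  haveI : CompleteSpace (Matrix (Fin n) (Fin n) ℂ) := FiniteDimensional.complete ℂ _
  obtain ⟨μ₀, hμ₀mem, hμ₀max⟩ :=
    (spectrum.isCompact (exp A)).exists_isMaxOn (spectrum.nonempty (exp A))
      continuous_norm.continuousOn
  have hlt : ∀ μ ∈ spectrum ℂ (exp A), ‖μ‖ < 1 := by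
    intro μ hμ
    obtain ⟨lam, hlam, rfl⟩ := spec_subset hμ
    rw [Complex.norm_exp]
    exact Real.exp_lt_one_iff.mpr (hA lam hlam)
  have h1 : spectralRadius ℂ (exp A) ≤ ‖μ₀‖₊ := by
    rw [spectralRadius]
    exact iSup₂_le fun μ hμ => by exact_mod_cast ENNReal.coe_le_coe.mpr (hμ₀max hμ)
  calc spectralRadius ℂ (exp A) ≤ (‖μ₀‖₊ : ENNReal) := h1
    _ < 1 := by exact_mod_cast hlt μ₀ hμ₀mem

lemma pow_norm_decay {A : Matrix (Fin n) (Fin n) ℂ}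
    (h : spectralRadius ℂ (exp A) < 1) :
    ∃ r : ℝ, 0 < r ∧ r < 1 ∧ ∃ N₀ : ℕ, ∀ k ≥ N₀, ‖(exp A) ^ k‖ ≤ r ^ k := by
  haveI : CompleteSpace (Matrix (Fin n) (Fin n) ℂ) := FiniteDimensional.complete ℂ _
  set ρ := spectralRadius ℂ (exp A)
  obtain ⟨r, hρr, hr1⟩ := exists_between h
  have hrtop : r ≠ ⊤ := (hr1.trans_le le_top).ne
  set r' : NNReal := r.toNNReal
  have hr'1 : (max (r'.toReal) (1/2)) < 1 := by
    apply max_lt _ (by norm_num)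
    have := ENNReal.toReal_lt_toReal hrtop (by norm_num : (1 : ENNReal) ≠ ⊤) |>.mpr hr1
    simpa [r', ENNReal.coe_toNNReal_eq_toReal] using this
  refine ⟨max (r'.toReal) (1/2), lt_max_of_lt_right (by norm_num), hr'1, ?_⟩
  have htend := spectrum.pow_nnnorm_pow_one_div_tendsto_nhds_spectralRadius (exp A)
  have hev : ∀ᶠ k : ℕ in atTop, (‖(exp A) ^ k‖₊ : ENNReal) ^ (1 / (k:ℝ)) < r :=
    htend.eventually_lt_const hρr
  rw [Filter.eventually_atTop] at hev
  obtain ⟨N₀, hN₀⟩ := hev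
  refine ⟨max N₀ 1, fun k hk => ?_⟩
  have hk1 : 1 ≤ k := le_trans (le_max_right _ _) hk
  have hkN := le_trans (le_max_left N₀ 1) hk
  have h2 := hN₀ k hkN
  have hkne : (k : ℝ) ≠ 0 := by positivity
  have h3 : (‖(exp A) ^ k‖₊ : ENNReal) < r ^ (k : ℝ) := by
    have := ENNReal.rpow_lt_rpow h2 (by positivity : (0:ℝ) < (k:ℝ))
    rwa [← ENNReal.rpow_mul, one_div, inv_mul_cancel₀ hkne, ENNReal.rpow_one] at this
  have h4 : ‖(exp A) ^ k‖ ≤ r'.toReal ^ k := by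
    have hrr : r = (r' : ENNReal) := (ENNReal.coe_toNNReal hrtop).symm
    rw [hrr, ← ENNReal.coe_rpow_of_nonneg _ (by positivity : (0:ℝ) ≤ (k:ℝ))] at h3
    have h5 : ‖(exp A) ^ k‖₊ ≤ r' ^ (k:ℝ) := by exact_mod_cast h3.le
    calc ‖(exp A) ^ k‖ = (‖(exp A) ^ k‖₊ : ℝ) := rfl
      _ ≤ ((r' ^ (k:ℝ) : NNReal) : ℝ) := by exact_mod_cast h5
      _ = r'.toReal ^ k := by
          rw [NNReal.rpow_natCast]; rfl
  exact h4.trans (pow_le_pow_left₀ (by positivity) (le_max_left _ _) k)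

lemma norm_le_norm_map (B : Matrix (Fin n) (Fin n) ℝ) :
    ‖B‖ ≤ ‖B.map (algebraMap ℝ ℂ)‖ := by
  rw [Matrix.l2_opNorm_def B]
  refine ContinuousLinearMap.opNorm_le_bound _ (norm_nonneg _) fun x => ?_
  set x' : Fin n → ℝ := WithLp.equiv 2 (Fin n → ℝ) x with hx'
  set z : EuclideanSpace ℂ (Fin n) := (WithLp.equiv 2 (Fin n → ℂ)).symm (fun i => (x' i : ℂ))
    with hz
  have ha : ‖z‖ = ‖x‖ := by
    simp [EuclideanSpace.norm_eq, hz]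
    congr 1
  have hmv : (B.map (algebraMap ℝ ℂ)) *ᵥ (fun i => (x' i : ℂ))
      = fun j => (((B *ᵥ x') j : ℝ) : ℂ) := by
    funext j
    simp only [Matrix.mulVec, dotProduct, Matrix.map_apply]
    push_cast
    rfl
  have hb : ‖Matrix.toEuclideanLin (B.map (algebraMap ℝ ℂ)) z‖ = ‖Matrix.toEuclideanLin B x‖ := by
    rw [Matrix.toEuclideanLin_apply, Matrix.toEuclideanLin_apply]
    simp only [hz, Equiv.apply_symm_apply, WithLp.equiv_symm_apply, WithLp.ofLp_toLp]
    rw [hmv]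
    simp [EuclideanSpace.norm_eq]
    rfl
  have hle := Matrix.l2_opNorm_mulVec (B.map (algebraMap ℝ ℂ)) z
  have hEq : (EuclideanSpace.equiv (Fin n) ℂ).symm ((B.map (algebraMap ℝ ℂ)) *ᵥ z)
      = Matrix.toEuclideanLin (B.map (algebraMap ℝ ℂ)) z := rfl
  rw [hEq, hb, ha] at hle
  exact hle

lemma hurwitz_decay (M : Matrix (Fin n) (Fin n) ℝ) (hM : Hurwitz M) :
    ∃ c > (0:ℝ), ∃ lam > (0:ℝ), ∃ T0 : ℝ, 0 ≤ T0 ∧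
      ∀ t ≥ T0, ‖exp (t • M)‖ ≤ c * Real.exp (-lam * t) := by
  haveI : CompleteSpace (Matrix (Fin n) (Fin n) ℂ) := FiniteDimensional.complete ℂ _
  rcases Nat.eq_zero_or_pos n with hn | hn
  · subst hn
    refine ⟨1, one_pos, 1, one_pos, 0, le_refl _, fun t _ => ?_⟩
    have : exp (t • M) = 0 := Subsingleton.elim _ _
    rw [this, norm_zero]
    positivity
  haveI : NeZero n := ⟨hn.ne'⟩
  letI : NormedAlgebra ℚ (Matrix (Fin n) (Fin n) ℂ) := .restrictScalars ℚ ℂ _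
  letI : NormedAlgebra ℚ (Matrix (Fin n) (Fin n) ℝ) := .restrictScalars ℚ ℝ _
  set A : Matrix (Fin n) (Fin n) ℂ := M.map (algebraMap ℝ ℂ) with hA
  obtain ⟨r, hr0, hr1, N₀, hpow⟩ :=
    pow_norm_decay (spectralRadius_exp_lt_one (spectrum_exp_subset A) hM)
  have hcont : Continuous fun s : ℝ => exp (s • A) :=
    exp_continuous.comp (continuous_id.smul continuous_const)
  obtain ⟨K, hK⟩ := (isCompact_Icc (a := (0:ℝ)) (b := 1)).exists_bound_of_continuousOn
    hcont.continuousOn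
  set K' := max K 1 with hK'
  have hK'pos : 0 < K' := lt_of_lt_of_le one_pos (le_max_right _ _)
  refine ⟨K' / r, by positivity, -Real.log r, by
      have := Real.log_neg hr0 hr1; linarith, (N₀ : ℝ) + 1, by positivity, fun t ht => ?_⟩
  have ht0 : (0:ℝ) ≤ t := le_trans (by positivity) ht
  set k := ⌊t⌋₊ with hk
  have hkN : N₀ ≤ k := Nat.le_floor (by linarith)
  have hkt : (k : ℝ) ≤ t := Nat.floor_le ht0
  have htk1 : t < (k : ℝ) + 1 := Nat.lt_floor_add_one t
  set s := t - (k : ℝ) with hs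
  have hs01 : s ∈ Set.Icc (0:ℝ) 1 := ⟨by linarith, by linarith⟩
  set Φm := (Algebra.ofId ℝ ℂ).mapMatrix (m := Fin n) with hΦm
  have hΦmcont : Continuous Φm := Φm.toLinearMap.continuous_of_finiteDimensional
  have hmapexp : (exp (t • M)).map (algebraMap ℝ ℂ) = exp (t • A) := by
    have h1 : Φm (exp (t • M)) = exp (Φm (t • M)) := map_exp Φm hΦmcont _
    have h2 : Φm (t • M) = t • A := by
      rw [_root_.map_smul]
      rfl
    have h3 : (exp : Matrix (Fin n) (Fin n) ℂ → _) = exp := rfl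
    calc (exp (t • M)).map (algebraMap ℝ ℂ) = Φm (exp (t • M)) := rfl
      _ = exp (t • A) := by rw [h1, h2]
      _ = exp (t • A) := by rw [h3]
  have hnorm1 : ‖exp (t • M)‖ ≤ ‖exp (t • A)‖ := by
    rw [← hmapexp]; exact norm_le_norm_map _
  have hsplit : exp (t • A) = exp (s • A) * (exp A) ^ k := by
    have hco : Commute (s • A) ((k : ℝ) • A) :=
      (((Commute.refl A).smul_left (k:ℝ)).smul_right s).symm
    have : t • A = s • A + (k : ℝ) • A := by
      rw [← add_smul]; congr 1; linarith
    rw [this, exp_add_of_commute _ _ hco]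
    congr 1
    rw [show ((k : ℝ) • A) = (k : ℕ) • A from (Nat.cast_smul_eq_nsmul ℝ k A)]
    exact Matrix.exp_nsmul k A
  have hbound : ‖exp (t • A)‖ ≤ K' * r ^ k := by
    rw [hsplit]
    calc ‖exp (s • A) * (exp A) ^ k‖ ≤ ‖exp (s • A)‖ * ‖(exp A) ^ k‖ := norm_mul_le _ _
      _ ≤ K' * r ^ k := by
          apply mul_le_mul (le_trans (hK s hs01) (le_max_left _ _)) (hpow k hkN)
            (norm_nonneg _) (le_of_lt hK'pos)
  have hrk : r ^ k ≤ r ^ (t - 1) := by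
    rw [← Real.rpow_natCast r k]
    exact Real.rpow_le_rpow_of_exponent_ge hr0 hr1.le (by linarith)
  have hfin : K' * r ^ (t-1) = (K' / r) * Real.exp (-(-Real.log r) * t) := by
    rw [Real.rpow_sub hr0, Real.rpow_one, Real.rpow_def_of_pos hr0]
    ring_nf
  calc ‖exp (t • M)‖ ≤ ‖exp (t • A)‖ := hnorm1
    _ ≤ K' * r ^ k := hbound
    _ ≤ K' * r ^ (t-1) := by nlinarith [hK'pos]
    _ = (K' / r) * Real.exp (-(-Real.log r) * t) := hfin

variable {m p : ℕ}

lemma toEuclideanLin_mul_apply (A : Matrix (Fin m) (Fin n) ℝ) (B : Matrix (Fin n) (Fin p) ℝ)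
    (x : EuclideanSpace ℝ (Fin p)) :
    Matrix.toEuclideanLin (A * B) x = Matrix.toEuclideanLin A (Matrix.toEuclideanLin B x) := by
  simp only [Matrix.toEuclideanLin_apply, Equiv.apply_symm_apply, Matrix.mulVec_mulVec]

lemma toEuclideanLin_one_apply (x : EuclideanSpace ℝ (Fin m)) :
    Matrix.toEuclideanLin (1 : Matrix (Fin m) (Fin m) ℝ) x = x := by
  simp only [Matrix.toEuclideanLin_apply, Matrix.one_mulVec]

lemma norm_toEuclideanLin_apply_le (A : Matrix (Fin m) (Fin n) ℝ) (x : EuclideanSpace ℝ (Fin n)) :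
    ‖Matrix.toEuclideanLin A x‖ ≤ ‖A‖ * ‖x‖ :=
  ((Matrix.toEuclideanLin.trans LinearMap.toContinuousLinearMap) A).le_opNorm x

/-- Matrix to CLM, as a continuous linear map. -/
noncomputable def matCLM (m : ℕ) : Matrix (Fin m) (Fin m) ℝ →L[ℝ]
    (EuclideanSpace ℝ (Fin m) →L[ℝ] EuclideanSpace ℝ (Fin m)) :=
  LinearMap.toContinuousLinearMap
    (Matrix.toEuclideanLin.trans LinearMap.toContinuousLinearMap).toLinearMap

lemma matCLM_apply (A : Matrix (Fin m) (Fin m) ℝ) (x : EuclideanSpace ℝ (Fin m)) :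
    matCLM m A x = Matrix.toEuclideanLin A x := rfl

lemma ode_sol (Mm : Matrix (Fin m) (Fin m) ℝ) (e : ℝ → EuclideanSpace ℝ (Fin m))
    (he : ∀ t ≥ (0:ℝ), HasDerivAt e (Matrix.toEuclideanLin Mm (e t)) t) :
    ∀ t ≥ (0:ℝ), e t = Matrix.toEuclideanLin (exp (t • Mm)) (e 0) := by
  haveI : CompleteSpace (Matrix (Fin m) (Fin m) ℝ) := FiniteDimensional.complete ℝ _
  set c : ℝ → (EuclideanSpace ℝ (Fin m) →L[ℝ] EuclideanSpace ℝ (Fin m)) :=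
    fun y => matCLM m (exp ((-y) • Mm)) with hc
  have hcderiv : ∀ y : ℝ, HasDerivAt c (matCLM m (-(exp ((-y) • Mm) * Mm))) y := by
    intro y
    have h1 : HasDerivAt (fun u : ℝ => exp (u • Mm)) (exp ((-y) • Mm) * Mm) (-y) :=
      hasDerivAt_exp_smul_const (𝕂 := ℝ) Mm (-y)
    have h2 : HasDerivAt (fun x : ℝ => -x) (-1) y := hasDerivAt_neg y
    have h3 := HasDerivAt.scomp y h1 h2
    rw [neg_smul, one_smul] at h3
    exact (matCLM m).hasFDerivAt.comp_hasDerivAt y h3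
  set F : ℝ → EuclideanSpace ℝ (Fin m) := fun y => c y (e y) with hF
  have hFderiv : ∀ y ≥ (0:ℝ), HasDerivAt F 0 y := by
    intro y hy
    have h4 := (hcderiv y).clm_apply (he y hy)
    have h5 : matCLM m (-(exp ((-y) • Mm) * Mm)) (e y)
        + c y (Matrix.toEuclideanLin Mm (e y)) = 0 := by
      rw [map_neg, hc]
      simp only [ContinuousLinearMap.neg_apply]
      rw [matCLM_apply, matCLM_apply, toEuclideanLin_mul_apply]
      simp
    rwa [h5] at h4
  intro t ht
  have hconst : F t = F 0 := by
    rcases eq_or_lt_of_le ht with h | h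
    · rw [← h]
    refine constant_of_has_deriv_right_zero
      (fun y hy => ((hFderiv y hy.1).continuousAt).continuousWithinAt)
      (fun y hy => ((hFderiv y hy.1).hasDerivWithinAt)) t (Set.right_mem_Icc.mpr ht)
  have hF0 : F 0 = e 0 := by
    show Matrix.toEuclideanLin (exp ((-(0:ℝ)) • Mm)) (e 0) = e 0
    have h0 : ((-(0:ℝ))) • Mm = (0 : Matrix (Fin m) (Fin m) ℝ) := by norm_num
    rw [h0, exp_zero, toEuclideanLin_one_apply]
  have hFt : matCLM m (exp (t • Mm)) (F t) = e t := by
    show Matrix.toEuclideanLin (exp (t • Mm))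
      (Matrix.toEuclideanLin (exp ((-t) • Mm)) (e t)) = e t
    rw [← toEuclideanLin_mul_apply]
    have hco : Commute (t • Mm) ((-t) • Mm) := ((Commute.refl Mm).smul_left _).smul_right _
    rw [← exp_add_of_commute _ _ hco]
    have h1 : t • Mm + (-t) • Mm = 0 := by rw [← add_smul]; simp
    rw [h1, exp_zero, toEuclideanLin_one_apply]
  calc e t = matCLM m (exp (t • Mm)) (F t) := hFt.symm
    _ = matCLM m (exp (t • Mm)) (e 0) := by rw [hconst, hF0]
    _ = Matrix.toEuclideanLin (exp (t • Mm)) (e 0) := rfl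

end Auxiliary

/-- With known frequencies the disturbance estimate
`d̂₀ := −Ψ (η − N x₂)` converges exponentially to the disturbance `d = −Ψ ϱ`. -/
theorem stmt2 {rbar n₂ : ℕ}
    (M Φ T : Matrix (Fin rbar) (Fin rbar) ℝ)
    (N : Matrix (Fin rbar) (Fin n₂) ℝ) (Γ : Matrix (Fin n₂) (Fin rbar) ℝ)
    (hM : Hurwitz M) (hT : IsUnit T) (hSyl : T * Φ - M * T = N * Γ)
    (g : ℝ → EuclideanSpace ℝ (Fin n₂)) (hg : ContinuousOn g (Set.Ici 0))
    (ϱ η : ℝ → EuclideanSpace ℝ (Fin rbar)) (x₂ : ℝ → EuclideanSpace ℝ (Fin n₂))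
    (hϱ : ∀ t ≥ (0:ℝ), HasDerivAt ϱ (Matrix.toEuclideanLin (T * Φ * T⁻¹) (ϱ t)) t)
    (hx₂ : ∀ t ≥ (0:ℝ), HasDerivAt x₂
      (g t - Matrix.toEuclideanLin (Γ * T⁻¹) (ϱ t)) t)
    (hη : ∀ t ≥ (0:ℝ), HasDerivAt η
      (Matrix.toEuclideanLin M (η t) + Matrix.toEuclideanLin N (g t)
        - Matrix.toEuclideanLin (M * N) (x₂ t)) t) :
    ExpDecay (fun t =>
      (-(Matrix.toEuclideanLin (Γ * T⁻¹) (η t - Matrix.toEuclideanLin N (x₂ t))))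
        - (-(Matrix.toEuclideanLin (Γ * T⁻¹) (ϱ t)))) := by
  classical
  open scoped Matrix.Norms.L2Operator in
  open NormedSpace in
  set e : ℝ → EuclideanSpace ℝ (Fin rbar) :=
    fun t => η t - Matrix.toEuclideanLin N (x₂ t) - ϱ t with he_def
  have hTT : T * T⁻¹ = 1 := Matrix.mul_nonsing_inv T ((Matrix.isUnit_iff_isUnit_det T).mp hT)
  have hTΦ : T * Φ * T⁻¹ = M + N * (Γ * T⁻¹) := by
    have h1 : T * Φ = N * Γ + M * T := sub_eq_iff_eq_add.mp hSyl
    calc T * Φ * T⁻¹ = (N * Γ + M * T) * T⁻¹ := by rw [h1]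
      _ = N * (Γ * T⁻¹) + M * (T * T⁻¹) := by rw [add_mul, Matrix.mul_assoc, Matrix.mul_assoc]
      _ = M + N * (Γ * T⁻¹) := by rw [hTT, Matrix.mul_one, add_comm]
  have he : ∀ t ≥ (0:ℝ), HasDerivAt e (Matrix.toEuclideanLin M (e t)) t := by
    intro t ht
    have hN : HasDerivAt (fun t => Matrix.toEuclideanLin N (x₂ t))
        (Matrix.toEuclideanLin N (g t - Matrix.toEuclideanLin (Γ * T⁻¹) (ϱ t))) t :=
      (LinearMap.toContinuousLinearMap
        (Matrix.toEuclideanLin N)).hasFDerivAt.comp_hasDerivAt t (hx₂ t ht)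
    have hd := ((hη t ht).sub hN).sub (hϱ t ht)
    convert hd using 1
    · rfl
    · rfl
    · rfl
    · rfl
    rw [hTΦ, he_def]
    simp only [map_add, map_sub, LinearMap.add_apply, toEuclideanLin_mul_apply]
    abel
  obtain ⟨c, hc, lam, hlam, T0, hT0, hdecay⟩ := hurwitz_decay M hM
  refine ⟨(‖Γ * T⁻¹‖ * ‖e 0‖ + 1) * c, by positivity, lam, hlam, T0, fun t ht => ?_⟩
  have ht0 : (0:ℝ) ≤ t := le_trans hT0 ht
  have hsol := ode_sol M e he t ht0
  have hout : (-(Matrix.toEuclideanLin (Γ * T⁻¹) (η t - Matrix.toEuclideanLin N (x₂ t))))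
      - (-(Matrix.toEuclideanLin (Γ * T⁻¹) (ϱ t)))
      = -(Matrix.toEuclideanLin (Γ * T⁻¹) (e t)) := by
    rw [he_def]
    simp only [map_sub]
    abel
  show ‖(-(Matrix.toEuclideanLin (Γ * T⁻¹) (η t - Matrix.toEuclideanLin N (x₂ t))))
      - (-(Matrix.toEuclideanLin (Γ * T⁻¹) (ϱ t)))‖ ≤ _
  rw [hout, norm_neg]
  have hexp := hdecay t ht
  have h1 : ‖Matrix.toEuclideanLin (Γ * T⁻¹) (e t)‖ ≤ ‖Γ * T⁻¹‖ * ‖e t‖ :=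
    norm_toEuclideanLin_apply_le _ _
  have h2 : ‖e t‖ ≤ ‖exp (t • M)‖ * ‖e 0‖ := by
    rw [hsol]; exact norm_toEuclideanLin_apply_le _ _
  have h3 : (0:ℝ) < Real.exp (-lam * t) := Real.exp_pos _
  have h4 : (0:ℝ) ≤ ‖Γ * T⁻¹‖ := norm_nonneg _
  have h5 : (0:ℝ) ≤ ‖e 0‖ := norm_nonneg _
  have h6 : (0:ℝ) ≤ ‖exp (t • M)‖ := norm_nonneg _
  nlinarith [norm_nonneg (e t), mul_le_mul_of_nonneg_left hexp h4,
    mul_le_mul_of_nonneg_left h2 h4]
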